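/- arXiv:1703.05640 — 4 statements merged into one kernel-verified Lean document; each statement's English description precedes it below -/
import Mathlib

section
/- Let φ₀ ∈ ℝ be such that m·φ₀ is not an integer multiple of 2π for any nonzero integer m, and let g : ℝ → ℝ be continuous and 2π-periodic. Then for every φ ∈ ℝ, lim_{N→∞} (1/N)·∑_{k=1}^{N} g(φ + k·φ₀) = (1/(2π))·∫_{-π}^{π} g(θ) dθ. -/
open Filter Finset MeasureTheory Complex

section aux

open MeasureTheory Complex

/-- Averages of powers of a unit-modulus `z ≠ 1` tend to zero. -/
lemma geom_avg_tendsto_zero (z : ℂ) (hz : ‖z‖ = 1) (h1 : z ≠ 1) :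
    Tendsto (fun N : ℕ => (N : ℂ)⁻¹ * ∑ k ∈ Finset.Icc 1 N, z ^ k) atTop (nhds 0) := by
  have hz1 : ‖z - 1‖ ≠ 0 := by
    simpa [sub_eq_zero] using h1
  set C : ℝ := 4 / ‖z - 1‖ with hC
  have hbound : ∀ N : ℕ, ‖∑ k ∈ Finset.Icc 1 N, z ^ k‖ ≤ C := by
    intro N
    have hrange : ∀ n : ℕ, ‖∑ i ∈ Finset.range n, z ^ i‖ ≤ 2 / ‖z - 1‖ := by
      intro n
      rw [geom_sum_eq h1]
      rw [norm_div]
      have hpos : (0:ℝ) < ‖z - 1‖ := lt_of_le_of_ne (norm_nonneg _) (Ne.symm hz1)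
      gcongr
      calc ‖z ^ n - 1‖ ≤ ‖z ^ n‖ + ‖(1 : ℂ)‖ := norm_sub_le _ _
        _ = 2 := by simp [norm_pow, hz]; norm_num
    have : Finset.Icc 1 N = Finset.Ico 1 (N + 1) := by
      rw [Finset.Ico_add_one_right_eq_Icc]
    rw [this, Finset.sum_Ico_eq_sub _ (Nat.one_le_iff_ne_zero.mpr (Nat.succ_ne_zero N))]
    calc ‖∑ i ∈ Finset.range (N + 1), z ^ i - ∑ i ∈ Finset.range 1, z ^ i‖
        ≤ ‖∑ i ∈ Finset.range (N + 1), z ^ i‖ + ‖∑ i ∈ Finset.range 1, z ^ i‖ :=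
          norm_sub_le _ _
      _ ≤ 2 / ‖z - 1‖ + 2 / ‖z - 1‖ := add_le_add (hrange _) (hrange _)
      _ = C := by rw [hC]; ring
  rw [tendsto_zero_iff_norm_tendsto_zero]
  apply squeeze_zero (fun N => norm_nonneg _) (g := fun N : ℕ => C / N)
  · intro N
    rw [norm_mul, norm_inv]
    rcases Nat.eq_zero_or_pos N with h | h
    · simp only [h, Nat.cast_zero, inv_zero, norm_zero, zero_mul, div_zero]; positivity
    · rw [div_eq_inv_mul]
      have h1N : (0:ℝ) ≤ (N:ℝ)⁻¹ := by positivity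
      have := hbound N
      calc ‖(N:ℂ)‖⁻¹ * ‖∑ k ∈ Finset.Icc 1 N, z ^ k‖
          = (N:ℝ)⁻¹ * ‖∑ k ∈ Finset.Icc 1 N, z ^ k‖ := by norm_num
        _ ≤ (N:ℝ)⁻¹ * C := by gcongr
  · exact tendsto_const_div_atTop_nhds_zero_nat C

end aux

section key

variable [hT : Fact (0 < 2 * Real.pi)]

lemma integrable_cm (f : C(AddCircle (2 * Real.pi), ℂ)) :
    Integrable f (volume : Measure (AddCircle (2 * Real.pi))) :=
  f.continuous.integrable_of_hasCompactSupport
    (IsCompact.of_isClosed_subset isCompact_univ (isClosed_tsupport _) (Set.subset_univ _))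

lemma vol_toReal :
    (volume (Set.univ : Set (AddCircle (2 * Real.pi)))).toReal = 2 * Real.pi := by
  rw [AddCircle.measure_univ, ENNReal.toReal_ofReal hT.out.le]

lemma key_lemma (φ₀ : ℝ)
    (hirr : ∀ m : ℤ, m ≠ 0 → ¬∃ k : ℤ, (m : ℝ) * φ₀ = (k : ℝ) * (2 * Real.pi)) (φ : ℝ)
    (f : C(AddCircle (2 * Real.pi), ℂ)) :
    Tendsto (fun N : ℕ => (N : ℂ)⁻¹ *
        ∑ k ∈ Finset.Icc 1 N, f ((φ + (k : ℝ) * φ₀ : ℝ) : AddCircle (2 * Real.pi)))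
      atTop
      (nhds (((2 * Real.pi : ℝ) : ℂ)⁻¹ * ∫ x : AddCircle (2 * Real.pi), f x)) := by
  set A : ℕ → C(AddCircle (2 * Real.pi), ℂ) → ℂ := fun N f => (N : ℂ)⁻¹ *
      ∑ k ∈ Finset.Icc 1 N, f ((φ + (k : ℝ) * φ₀ : ℝ) : AddCircle (2 * Real.pi)) with hA
  set L : C(AddCircle (2 * Real.pi), ℂ) → ℂ := fun f =>
      ((2 * Real.pi : ℝ) : ℂ)⁻¹ * ∫ x : AddCircle (2 * Real.pi), f x with hL
  show Tendsto (fun N => A N f) atTop (nhds (L f))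
  have hπ : (0:ℝ) < 2 * Real.pi := hT.out
  -- difference bounds
  have hAle : ∀ (N : ℕ) (u v : C(AddCircle (2 * Real.pi), ℂ)),
      ‖A N u - A N v‖ ≤ dist u v := by
    intro N u v
    rcases Nat.eq_zero_or_pos N with h0 | h0
    · simp [hA, h0, dist_nonneg]
    · have heq : A N u - A N v = (N : ℂ)⁻¹ *
          ∑ k ∈ Finset.Icc 1 N,
            (u ((φ + (k : ℝ) * φ₀ : ℝ) : AddCircle (2 * Real.pi)) -
             v ((φ + (k : ℝ) * φ₀ : ℝ) : AddCircle (2 * Real.pi))) := by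
        simp only [hA]; simp only [Finset.sum_sub_distrib, mul_sub]
      rw [heq, norm_mul, norm_inv]
      have hsum : ‖∑ k ∈ Finset.Icc 1 N,
          (u ((φ + (k : ℝ) * φ₀ : ℝ) : AddCircle (2 * Real.pi)) -
           v ((φ + (k : ℝ) * φ₀ : ℝ) : AddCircle (2 * Real.pi)))‖ ≤ (N : ℝ) * dist u v := by
        refine (norm_sum_le _ _).trans ?_
        have hterm : ∀ k ∈ Finset.Icc 1 N,
            ‖u ((φ + (k : ℝ) * φ₀ : ℝ) : AddCircle (2 * Real.pi)) -
             v ((φ + (k : ℝ) * φ₀ : ℝ) : AddCircle (2 * Real.pi))‖ ≤ dist u v := by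
          intro k _
          rw [← dist_eq_norm]
          exact ContinuousMap.dist_apply_le_dist _
        calc ∑ k ∈ Finset.Icc 1 N, ‖u ((φ + (k : ℝ) * φ₀ : ℝ) : AddCircle (2 * Real.pi)) -
               v ((φ + (k : ℝ) * φ₀ : ℝ) : AddCircle (2 * Real.pi))‖
            ≤ ∑ _k ∈ Finset.Icc 1 N, dist u v := Finset.sum_le_sum hterm
          _ = (N : ℝ) * dist u v := by simp [Nat.card_Icc]
      have hN : (0:ℝ) < (N : ℝ) := by exact_mod_cast h0
      calc ‖(N : ℂ)‖⁻¹ * ‖∑ k ∈ Finset.Icc 1 N,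
            (u ((φ + (k : ℝ) * φ₀ : ℝ) : AddCircle (2 * Real.pi)) -
             v ((φ + (k : ℝ) * φ₀ : ℝ) : AddCircle (2 * Real.pi)))‖
          = (N : ℝ)⁻¹ * ‖∑ k ∈ Finset.Icc 1 N,
            (u ((φ + (k : ℝ) * φ₀ : ℝ) : AddCircle (2 * Real.pi)) -
             v ((φ + (k : ℝ) * φ₀ : ℝ) : AddCircle (2 * Real.pi)))‖ := by norm_num
        _ ≤ (N : ℝ)⁻¹ * ((N : ℝ) * dist u v) := by gcongr
        _ = dist u v := by field_simp
  have hLle : ∀ u v : C(AddCircle (2 * Real.pi), ℂ), ‖L u - L v‖ ≤ dist u v := by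
    intro u v
    have heq : L u - L v = ((2 * Real.pi : ℝ) : ℂ)⁻¹ *
        ∫ x : AddCircle (2 * Real.pi), (u x - v x) := by
      simp only [hL]
      rw [integral_sub (integrable_cm u) (integrable_cm v), mul_sub]
    rw [heq, norm_mul, norm_inv]
    have hint : ‖∫ x : AddCircle (2 * Real.pi), (u x - v x)‖ ≤ dist u v * (2 * Real.pi) := by
      have := MeasureTheory.norm_integral_le_of_norm_le_const
        (μ := (volume : Measure (AddCircle (2 * Real.pi)))) (C := dist u v)
        (f := fun x => u x - v x) ?_
      · rwa [measureReal_def, vol_toReal] at this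
      · filter_upwards with x
        rw [← dist_eq_norm]
        exact ContinuousMap.dist_apply_le_dist _
    calc ‖((2 * Real.pi : ℝ) : ℂ)‖⁻¹ * ‖∫ x : AddCircle (2 * Real.pi), (u x - v x)‖
        = (2 * Real.pi)⁻¹ * ‖∫ x : AddCircle (2 * Real.pi), (u x - v x)‖ := by
          rw [Complex.norm_real, Real.norm_of_nonneg hπ.le]
      _ ≤ (2 * Real.pi)⁻¹ * (dist u v * (2 * Real.pi)) := by gcongr
      _ = dist u v := by field_simp
  -- characters
  have hchar : ∀ n : ℤ, Tendsto (fun N => A N (fourier n)) atTop (nhds (L (fourier n))) := by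
    intro n
    rcases eq_or_ne n 0 with rfl | hn
    · have hAval : ∀ N : ℕ, 1 ≤ N → A N (fourier 0) = 1 := by
        intro N hN
        have hNne : ((N : ℂ)) ≠ 0 := by exact_mod_cast Nat.one_le_iff_ne_zero.mp hN
        simp only [hA]
        simp only [fourier_zero, Finset.sum_const, Nat.card_Icc, add_tsub_cancel_right,
          nsmul_eq_mul, mul_one]
        field_simp
      have hLval : L (fourier 0) = 1 := by
        simp only [hL]
        have : ∫ x : AddCircle (2 * Real.pi), fourier 0 x = ((2 * Real.pi : ℝ) : ℂ) := by
          simp only [fourier_zero]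
          rw [MeasureTheory.integral_const, measureReal_def, vol_toReal]
          simp
        have h2 : ((2 * Real.pi : ℝ) : ℂ) ≠ 0 := by
          simp [Real.pi_ne_zero]
        rw [this, inv_mul_cancel₀ h2]
      rw [hLval]
      refine Tendsto.congr' ?_ tendsto_const_nhds
      filter_upwards [eventually_ge_atTop 1] with N hN
      exact (hAval N hN).symm
    · -- nonzero character
      have hfc : ∀ x : ℝ, fourier n ((x : ℝ) : AddCircle (2 * Real.pi)) =
          Complex.exp (Complex.I * n * x) := by
        intro x
        rw [fourier_coe_apply]
        congr 1
        push_cast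
        have hπ' : (Real.pi : ℂ) ≠ 0 := by exact_mod_cast Real.pi_ne_zero
        field_simp
      set z : ℂ := Complex.exp (Complex.I * n * φ₀) with hzdef
      have hznorm : ‖z‖ = 1 := by
        rw [hzdef, Complex.norm_exp]
        simp
      have hzne : z ≠ 1 := by
        intro h
        rw [hzdef, Complex.exp_eq_one_iff] at h
        obtain ⟨j, hj⟩ := h
        apply hirr n hn
        refine ⟨j, ?_⟩
        have him := congrArg Complex.im hj
        simpa [mul_comm, mul_assoc, mul_left_comm] using him
      have hAval : ∀ N : ℕ, A N (fourier n) =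
          Complex.exp (Complex.I * n * φ) * ((N : ℂ)⁻¹ * ∑ k ∈ Finset.Icc 1 N, z ^ k) := by
        intro N
        simp only [hA]
        have hterm : ∀ k : ℕ, fourier n ((φ + (k : ℝ) * φ₀ : ℝ) : AddCircle (2 * Real.pi)) =
            Complex.exp (Complex.I * n * φ) * z ^ k := by
          intro k
          rw [hfc]
          have harg : (Complex.I * n * ((φ : ℝ) + (k : ℝ) * φ₀ : ℝ)) =
              Complex.I * n * φ + (k : ℕ) * (Complex.I * n * φ₀) := by
            push_cast; ring
          rw [harg, Complex.exp_add, Complex.exp_nat_mul]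
        simp only [hterm]
        rw [← Finset.mul_sum]
        ring
      have hLval : L (fourier n) = 0 := by
        simp only [hL]
        have hI : (∫ x : AddCircle (2 * Real.pi), fourier n x) = 0 := by
          rw [← AddCircle.intervalIntegral_preimage (2 * Real.pi) 0]
          simp only [hfc]
          rw [integral_exp_mul_complex (by simp [Complex.I_ne_zero, hn] :
            (Complex.I * (n:ℂ)) ≠ 0)]
          have h1 : Complex.exp (Complex.I * (n:ℂ) * ((0:ℝ) + 2 * Real.pi : ℝ)) = 1 := by
            have : (Complex.I * (n:ℂ) * ((0:ℝ) + 2 * Real.pi : ℝ)) = (n : ℂ) * (2 * Real.pi * Complex.I) := by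
              push_cast; ring
            rw [this, Complex.exp_int_mul_two_pi_mul_I]
          rw [h1]
          simp
        rw [hI, mul_zero]
      rw [hLval]
      have := (geom_avg_tendsto_zero z hznorm hzne).const_mul (Complex.exp (Complex.I * n * φ))
      rw [mul_zero] at this
      exact Tendsto.congr (fun N => (hAval N).symm) this
  -- span
  have hspan : ∀ u ∈ Submodule.span ℂ (Set.range (@fourier (2 * Real.pi))),
      Tendsto (fun N => A N u) atTop (nhds (L u)) := by
    intro u hu
    induction hu using Submodule.span_induction with
    | mem x hx =>
      obtain ⟨n, rfl⟩ := hx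
      exact hchar n
    | zero =>
      have hAz : ∀ N, A N 0 = 0 := by intro N; simp [hA]
      have hLz : L 0 = 0 := by simp [hL]
      rw [hLz]
      exact Tendsto.congr (fun N => (hAz N).symm) tendsto_const_nhds
    | add x y hx hy ihx ihy =>
      have hAadd : ∀ N, A N (x + y) = A N x + A N y := by
        intro N; simp [hA, Finset.sum_add_distrib, mul_add]
      have hLadd : L (x + y) = L x + L y := by
        simp only [hL, ContinuousMap.add_apply]
        rw [integral_add (integrable_cm x) (integrable_cm y), mul_add]
      rw [hLadd]
      exact Tendsto.congr (fun N => (hAadd N).symm) (ihx.add ihy)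
    | smul c x hx ihx =>
      have hAsmul : ∀ N, A N (c • x) = c * A N x := by
        intro N
        simp only [hA, ContinuousMap.smul_apply, smul_eq_mul, ← Finset.mul_sum]
        ring
      have hLsmul : L (c • x) = c * L x := by
        simp only [hL, ContinuousMap.smul_apply, smul_eq_mul]
        rw [MeasureTheory.integral_const_mul]
        ring
      rw [hLsmul]
      exact Tendsto.congr (fun N => (hAsmul N).symm) (ihx.const_mul c)
  -- density
  have hmem : f ∈ closure ((Submodule.span ℂ (Set.range (@fourier (2 * Real.pi)))) : Set _) := by
    have h1 : f ∈ (Submodule.span ℂ (Set.range (@fourier (2 * Real.pi)))).topologicalClosure := by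
      rw [span_fourier_closure_eq_top]; trivial
    rwa [← Submodule.topologicalClosure_coe]
  rw [Metric.tendsto_atTop]
  intro ε hε
  obtain ⟨u, humem, hudist⟩ := Metric.mem_closure_iff.mp hmem (ε / 4) (by positivity)
  have h2 := hspan u humem
  rw [Metric.tendsto_atTop] at h2
  obtain ⟨N₀, hN₀⟩ := h2 (ε / 4) (by positivity)
  refine ⟨N₀, fun N hN => ?_⟩
  have d1 := hAle N f u
  have d2 := hLle f u
  have d3 := hN₀ N hN
  have hdd : dist f u < ε / 4 := hudist
  calc dist (A N f) (L f)
      ≤ dist (A N f) (A N u) + dist (A N u) (L u) + dist (L u) (L f) :=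
        dist_triangle4 _ _ _ _
    _ < ε / 4 + ε / 4 + ε / 4 := by
        have e1 : dist (A N f) (A N u) < ε / 4 := by
          rw [dist_eq_norm]; exact lt_of_le_of_lt d1 hdd
        have e3 : dist (L u) (L f) < ε / 4 := by
          rw [dist_comm, dist_eq_norm]; exact lt_of_le_of_lt d2 hdd
        linarith
    _ < ε := by linarith

end key

theorem stmt_2 (φ₀ : ℝ)
    (hirr : ∀ m : ℤ, m ≠ 0 → ¬∃ k : ℤ, (m : ℝ) * φ₀ = (k : ℝ) * (2 * Real.pi))
    (g : ℝ → ℝ) (hg : Continuous g) (hper : Function.Periodic g (2 * Real.pi)) :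
    ∀ φ : ℝ,
      Tendsto (fun N : ℕ => (1 / (N : ℝ)) * ∑ k ∈ Finset.Icc 1 N, g (φ + (k : ℝ) * φ₀))
        atTop (nhds ((1 / (2 * Real.pi)) * ∫ θ in (-Real.pi)..Real.pi, g θ)) := by
  intro φ
  haveI : Fact (0 < 2 * Real.pi) := ⟨by positivity⟩
  have hlift : Continuous hper.lift := continuous_coinduced_dom.mpr hg
  set F : C(AddCircle (2 * Real.pi), ℂ) :=
    ⟨fun x => ((hper.lift x : ℝ) : ℂ), Complex.continuous_ofReal.comp hlift⟩ with hF
  have hkey := key_lemma φ₀ hirr φ F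
  have h2 := (Complex.continuous_re.tendsto _).comp hkey
  -- identify the real integral
  have hFcoe : ∀ x : ℝ, F ((x : ℝ) : AddCircle (2 * Real.pi)) = ((g x : ℝ) : ℂ) := by
    intro x
    simp only [hF, ContinuousMap.coe_mk, Function.Periodic.lift_coe]
  have hintF : (∫ x : AddCircle (2 * Real.pi), F x) =
      (((∫ θ in (-Real.pi)..Real.pi, g θ : ℝ)) : ℂ) := by
    have h3 : (∫ x : AddCircle (2 * Real.pi), F x) =
        (((∫ x : AddCircle (2 * Real.pi), hper.lift x : ℝ)) : ℂ) := by
      have h0 := integral_ofReal (𝕜 := ℂ)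
        (μ := (volume : MeasureTheory.Measure (AddCircle (2 * Real.pi)))) (f := hper.lift)
      show (∫ x : AddCircle (2 * Real.pi), ((hper.lift x : ℝ) : ℂ)) =
        (((∫ x : AddCircle (2 * Real.pi), hper.lift x : ℝ)) : ℂ)
      exact h0
    have h4 : (∫ a in (-Real.pi)..(-Real.pi + 2 * Real.pi), hper.lift ↑a) =
        ∫ x : AddCircle (2 * Real.pi), hper.lift x :=
      AddCircle.intervalIntegral_preimage (2 * Real.pi) (-Real.pi) _
    have h5 : -Real.pi + 2 * Real.pi = Real.pi := by ring
    rw [h3, ← h4, h5]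
    congr 1
  -- identify limit value
  have hlim : (((2 * Real.pi : ℝ) : ℂ)⁻¹ * ∫ x : AddCircle (2 * Real.pi), F x).re =
      (1 / (2 * Real.pi)) * ∫ θ in (-Real.pi)..Real.pi, g θ := by
    rw [hintF]
    have : ((2 * Real.pi : ℝ) : ℂ)⁻¹ * (((∫ θ in (-Real.pi)..Real.pi, g θ : ℝ)) : ℂ) =
        (((1 / (2 * Real.pi)) * ∫ θ in (-Real.pi)..Real.pi, g θ : ℝ) : ℂ) := by
      push_cast
      ring
    rw [this, Complex.ofReal_re]
  rw [← hlim]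
  refine Tendsto.congr ?_ h2
  intro N
  simp only [Function.comp_apply]
  have hsum : (N : ℂ)⁻¹ * ∑ k ∈ Finset.Icc 1 N,
      F ((φ + (k : ℝ) * φ₀ : ℝ) : AddCircle (2 * Real.pi)) =
      (((1 / (N : ℝ)) * ∑ k ∈ Finset.Icc 1 N, g (φ + (k : ℝ) * φ₀) : ℝ) : ℂ) := by
    simp only [hFcoe]
    push_cast
    ring
  rw [hsum, Complex.ofReal_re]
end

section
/- The set S' ⊆ ℝ² whose boundary contains the curve {(ν, arccos(ν)/π) : ν ∈ [1/2, 1]} is not a basic closed semi-algebraic set; i.e., there do not exist finitely many polynomials G₁,…,G_u ∈ ℝ[X,Y] with S' = {s : G_i(s) ≥ 0 ∀i} and with boundary of S' containing that curve. -/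
open MvPolynomial Set

private lemma analyticAt_cos' (x : ℝ) : AnalyticAt ℝ Real.cos x := by
  have h : Real.cos = fun t : ℝ => Complex.reCLM (Complex.cos (Complex.ofRealCLM t)) := by
    funext t
    simp [Complex.cos_ofReal_re]
  rw [h]
  exact (Complex.reCLM.analyticAt _).comp
    (((Complex.differentiable_cos.analyticAt _).restrictScalars).comp
      (Complex.ofRealCLM.analyticAt _))

/-- The polynomial function `t ↦ g(cos (π t), t)` is analytic. -/
private lemma analytic_aux (g : MvPolynomial (Fin 2) ℝ) :
    AnalyticOnNhd ℝ (fun t : ℝ => MvPolynomial.eval ![Real.cos (Real.pi * t), t] g)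
      Set.univ := by
  induction g using MvPolynomial.induction_on with
  | C a => simpa using (analyticOnNhd_const : AnalyticOnNhd ℝ (fun _ : ℝ => a) Set.univ)
  | add p q hp hq => simpa only [map_add, Pi.add_def] using hp.add hq
  | mul_X p i hp =>
      simp only [map_mul, MvPolynomial.eval_X]
      apply hp.mul
      fin_cases i
      · simp only [Matrix.cons_val_zero]
        exact fun t _ => (analyticAt_cos' _).comp
          ((analyticAt_const.mul analyticAt_id) :
            AnalyticAt ℝ (fun t : ℝ => Real.pi * t) t)
      · simpa using (analyticOnNhd_id : AnalyticOnNhd ℝ (fun t : ℝ => t) Set.univ)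

/-- Partial evaluation: `Polynomial.eval t (aeval-type substitution)` agrees with full eval. -/
private lemma eval_subst (g : MvPolynomial (Fin 2) ℝ) (v : Fin 2 → Polynomial ℝ) (t : ℝ) :
    Polynomial.eval t (MvPolynomial.eval₂ Polynomial.C v g) =
      MvPolynomial.eval (fun i => Polynomial.eval t (v i)) g := by
  rw [MvPolynomial.polynomial_eval_eval₂]
  have h : (Polynomial.evalRingHom t).comp Polynomial.C = RingHom.id ℝ := by
    ext r; simp
  rw [h, MvPolynomial.eval₂_id]

/-- A nonzero polynomial cannot vanish on the arccos curve. -/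
private lemma key {g : MvPolynomial (Fin 2) ℝ}
    (h : ∀ ν ∈ Set.Icc (1 / 2 : ℝ) 1,
      MvPolynomial.eval ![ν, Real.arccos ν / Real.pi] g = 0) :
    g = 0 := by
  have pi_pos := Real.pi_pos
  -- Step 1: vanishing on the parametrized curve for t ∈ [0, 1/3]
  have h0 : ∀ t ∈ Set.Icc (0 : ℝ) (1 / 3),
      MvPolynomial.eval ![Real.cos (Real.pi * t), t] g = 0 := by
    intro t ht
    have ht0 : 0 ≤ Real.pi * t := mul_nonneg pi_pos.le ht.1
    have ht1 : Real.pi * t ≤ Real.pi / 3 := by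
      rw [div_eq_mul_inv]
      exact mul_le_mul_of_nonneg_left (by simpa using ht.2) pi_pos.le
    have htpi : Real.pi * t ≤ Real.pi := ht1.trans (by linarith)
    have hc1 : Real.cos (Real.pi * t) ≤ 1 := Real.cos_le_one _
    have hc2 : (1 / 2 : ℝ) ≤ Real.cos (Real.pi * t) := by
      have := Real.cos_le_cos_of_nonneg_of_le_pi ht0 (by linarith) ht1
      rwa [Real.cos_pi_div_three] at this
    have harc : Real.arccos (Real.cos (Real.pi * t)) / Real.pi = t := by
      rw [Real.arccos_cos ht0 htpi]
      field_simp
    have := h (Real.cos (Real.pi * t)) ⟨hc2, hc1⟩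
    rwa [harc] at this
  -- Step 2: analytic continuation to all t ∈ ℝ
  have h1 : ∀ t : ℝ, MvPolynomial.eval ![Real.cos (Real.pi * t), t] g = 0 := by
    have hA := analytic_aux g
    have hfz : (fun t : ℝ => MvPolynomial.eval ![Real.cos (Real.pi * t), t] g)
        =ᶠ[nhds (1 / 6 : ℝ)] 0 := by
      filter_upwards [Ioo_mem_nhds (by norm_num : (0 : ℝ) < 1 / 6)
        (by norm_num : (1 / 6 : ℝ) < 1 / 3)] with t ht
      exact h0 t ⟨ht.1.le, ht.2.le⟩
    have := hA.eqOn_zero_of_preconnected_of_eventuallyEq_zero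
      isPreconnected_univ (Set.mem_univ (1 / 6 : ℝ)) hfz
    exact fun t => this (Set.mem_univ t)
  -- Step 3: vanishing on the strip [-1,1] × ℝ
  have h2 : ∀ c ∈ Set.Icc (-1 : ℝ) 1, ∀ t : ℝ, MvPolynomial.eval ![c, t] g = 0 := by
    intro c hc t
    set p : Polynomial ℝ :=
      MvPolynomial.eval₂ Polynomial.C ![Polynomial.C c, Polynomial.X] g with hp
    have hroots : ∀ n : ℕ, Polynomial.IsRoot p (Real.arccos c / Real.pi + 2 * n) := by
      intro n
      have hev := eval_subst g ![Polynomial.C c, Polynomial.X]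
        (Real.arccos c / Real.pi + 2 * n)
      have hcos : Real.cos (Real.pi * (Real.arccos c / Real.pi + 2 * n)) = c := by
        have : Real.pi * (Real.arccos c / Real.pi + 2 * n)
            = Real.arccos c + (n : ℤ) * (2 * Real.pi) := by
          field_simp
          push_cast
          ring
        rw [this, Real.cos_add_int_mul_two_pi, Real.cos_arccos hc.1 hc.2]
      have hfun : (fun i => Polynomial.eval (Real.arccos c / Real.pi + 2 * n)
          (![Polynomial.C c, Polynomial.X] i))
          = ![c, Real.arccos c / Real.pi + 2 * n] := by
        funext i
        fin_cases i <;> simp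
      unfold Polynomial.IsRoot
      rw [← hp] at hev
      rw [hev, hfun]
      have := h1 (Real.arccos c / Real.pi + 2 * n)
      rwa [hcos] at this
    have hpz : p = 0 := by
      apply Polynomial.eq_zero_of_infinite_isRoot
      apply Set.Infinite.mono
        (s := Set.range (fun n : ℕ => Real.arccos c / Real.pi + 2 * n))
      · rintro x ⟨n, rfl⟩
        exact hroots n
      · apply Set.infinite_range_of_injective
        intro m n hmn
        have : (m : ℝ) = n := by linarith
        exact_mod_cast this
    have hev := eval_subst g ![Polynomial.C c, Polynomial.X] t
    rw [← hp, hpz] at hev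
    have hfun : (fun i => Polynomial.eval t (![Polynomial.C c, Polynomial.X] i))
        = ![c, t] := by
      funext i
      fin_cases i <;> simp
    rw [hfun] at hev
    simpa using hev.symm
  -- Step 4: vanishing everywhere
  have h3 : ∀ x : Fin 2 → ℝ, MvPolynomial.eval x g = 0 := by
    intro x
    set q : Polynomial ℝ :=
      MvPolynomial.eval₂ Polynomial.C ![Polynomial.X, Polynomial.C (x 1)] g with hq
    have hroots : ∀ c ∈ Set.Icc (-1 : ℝ) 1, Polynomial.IsRoot q c := by
      intro c hc
      have hev := eval_subst g ![Polynomial.X, Polynomial.C (x 1)] c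
      have hfun : (fun i => Polynomial.eval c (![Polynomial.X, Polynomial.C (x 1)] i))
          = ![c, x 1] := by
        funext i
        fin_cases i <;> simp
      unfold Polynomial.IsRoot
      rw [← hq] at hev
      rw [hev, hfun]
      exact h2 c hc (x 1)
    have hqz : q = 0 := by
      apply Polynomial.eq_zero_of_infinite_isRoot
      apply Set.Infinite.mono (s := Set.Icc (-1 : ℝ) 1)
      · exact fun c hc => hroots c hc
      · exact Set.Icc_infinite (by norm_num : (-1:ℝ) < 1)
    have hev := eval_subst g ![Polynomial.X, Polynomial.C (x 1)] (x 0)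
    rw [← hq, hqz] at hev
    have hfun : (fun i => Polynomial.eval (x 0) (![Polynomial.X, Polynomial.C (x 1)] i))
        = x := by
      funext i
      fin_cases i <;> simp
    rw [hfun] at hev
    simpa using hev.symm
  exact MvPolynomial.funext (q := 0) (fun x => by simpa using h3 x)

theorem stmt_5 :
    ¬∃ (S' : Set (Fin 2 → ℝ)) (u : ℕ) (G : Fin u → MvPolynomial (Fin 2) ℝ),
      S' = {s : Fin 2 → ℝ | ∀ i, 0 ≤ MvPolynomial.eval s (G i)} ∧
      {p : Fin 2 → ℝ | ∃ ν ∈ Set.Icc (1 / 2 : ℝ) 1,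
          p = ![ν, Real.arccos ν / Real.pi]} ⊆ frontier S' := by
  classical
  rintro ⟨S', u, G, hS, hcurve⟩
  set I : Finset (Fin u) := Finset.univ.filter (fun i => G i ≠ 0) with hI
  set g : MvPolynomial (Fin 2) ℝ := ∏ i ∈ I, G i with hg
  have hgne : g ≠ 0 := by
    rw [hg, Finset.prod_ne_zero_iff]
    intro i hi
    exact (Finset.mem_filter.mp hi).2
  have hSclosed : IsClosed S' := by
    rw [hS]
    have : {s : Fin 2 → ℝ | ∀ i, 0 ≤ MvPolynomial.eval s (G i)}
        = ⋂ i, {s : Fin 2 → ℝ | 0 ≤ MvPolynomial.eval s (G i)} := by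
      ext s; simp
    rw [this]
    exact isClosed_iInter fun i =>
      isClosed_le continuous_const (MvPolynomial.continuous_eval _)
  have hvanish : ∀ ν ∈ Set.Icc (1 / 2 : ℝ) 1,
      MvPolynomial.eval ![ν, Real.arccos ν / Real.pi] g = 0 := by
    intro ν hν
    set s : Fin 2 → ℝ := ![ν, Real.arccos ν / Real.pi] with hs
    have hsf : s ∈ frontier S' := hcurve ⟨ν, hν, rfl⟩
    by_contra hne
    -- all polynomials indexed by I are nonzero at s, hence positive since s ∈ S'
    have hallne : ∀ i ∈ I, MvPolynomial.eval s (G i) ≠ 0 := by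
      have hprod : MvPolynomial.eval s g = ∏ i ∈ I, MvPolynomial.eval s (G i) := by
        rw [hg]; exact map_prod _ _ _
      rw [hprod] at hne
      exact Finset.prod_ne_zero_iff.mp hne
    have hsS : s ∈ S' := by
      have := hsf.1
      rwa [hSclosed.closure_eq] at this
    have hpos : ∀ i ∈ I, 0 < MvPolynomial.eval s (G i) := by
      intro i hi
      have h0 : 0 ≤ MvPolynomial.eval s (G i) := by
        rw [hS] at hsS
        exact hsS i
      exact lt_of_le_of_ne h0 (fun e => hallne i hi e.symm)
    -- the open set of points where all these polynomials are positive
    set U : Set (Fin 2 → ℝ) := ⋂ i ∈ I, {x | 0 < MvPolynomial.eval x (G i)} with hU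
    have hUopen : IsOpen U :=
      isOpen_biInter_finset fun i _ =>
        isOpen_lt continuous_const (MvPolynomial.continuous_eval _)
    have hUS : U ⊆ S' := by
      intro x hx
      rw [hS]
      intro i
      by_cases hiI : i ∈ I
      · exact (Set.mem_iInter₂.mp hx i hiI).le
      · have : G i = 0 := by
          by_contra hne'
          exact hiI (Finset.mem_filter.mpr ⟨Finset.mem_univ i, hne'⟩)
        rw [this]
        simp
    have hsU : s ∈ U := Set.mem_iInter₂.mpr fun i hi => hpos i hi
    have hsint : s ∈ interior S' := (hUopen.subset_interior_iff.mpr hUS) hsU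
    exact hsf.2 hsint
  exact hgne (key hvanish)
end

section
/- The curve μ ↦ (ω(μ), η(μ)) := ((μ/π)·√(1 − 1/(25μ²)), arccos(1/(5μ))/π) for μ ∈ [1/5, 2/5] is concave as a graph: writing η as a function of ω along this curve, d²η/dω² ≤ 0. -/
noncomputable def omegaCurve (μ : ℝ) : ℝ :=
  (μ / Real.pi) * Real.sqrt (1 - 1 / (25 * μ ^ 2))

noncomputable def etaCurve (μ : ℝ) : ℝ :=
  Real.arccos (1 / (5 * μ)) / Real.pi

noncomputable def hAux (x : ℝ) : ℝ := Real.arctan (5 * Real.pi * x) / Real.pi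

lemma hAux_hasDerivAt (x : ℝ) :
    HasDerivAt hAux ((1 / (1 + (5 * Real.pi * x) ^ 2) * (5 * Real.pi)) / Real.pi) x := by
  have h1 : HasDerivAt (fun x : ℝ => 5 * Real.pi * x) (5 * Real.pi) x := by
    simpa using (hasDerivAt_id x).const_mul (5 * Real.pi)
  exact (h1.arctan).div_const Real.pi

lemma hAux_concave : ConcaveOn ℝ (Set.Ici (0:ℝ)) hAux := by
  have hderiv : ∀ x : ℝ, deriv hAux x = (1 / (1 + (5 * Real.pi * x) ^ 2) * (5 * Real.pi)) / Real.pi :=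
    fun x => (hAux_hasDerivAt x).deriv
  refine AntitoneOn.concaveOn_of_deriv (convex_Ici 0) ?_ ?_ ?_
  · exact fun x _ => (hAux_hasDerivAt x).continuousAt.continuousWithinAt
  · exact fun x _ => (hAux_hasDerivAt x).differentiableAt.differentiableWithinAt
  · intro a ha b hb hab
    rw [interior_Ici] at ha hb
    rw [hderiv, hderiv]
    have hπ : (0:ℝ) < Real.pi := Real.pi_pos
    have h1 : (0:ℝ) < 1 + (5 * Real.pi * a) ^ 2 := by positivity
    have h2 : (5 * Real.pi * a) ^ 2 ≤ (5 * Real.pi * b) ^ 2 := by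
      have hab' : 5 * Real.pi * a ≤ 5 * Real.pi * b := by nlinarith [(Set.mem_Ioi.mp ha).le, (Set.mem_Ioi.mp hb).le]
      exact pow_le_pow_left₀ (mul_nonneg (by positivity) (Set.mem_Ioi.mp ha).le) hab' 2
    gcongr

lemma omega_eq_tan (μ : ℝ) (hμ : μ ∈ Set.Icc (1 / 5 : ℝ) (2 / 5)) :
    5 * Real.pi * omegaCurve μ = Real.sqrt (1 - (1 / (5 * μ)) ^ 2) / (1 / (5 * μ)) := by
  obtain ⟨h1, h2⟩ := hμ
  have hμ0 : (0:ℝ) < μ := by linarith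
  have hπ : (0:ℝ) < Real.pi := Real.pi_pos
  have : (1 : ℝ) - (1 / (5 * μ)) ^ 2 = 1 - 1 / (25 * μ ^ 2) := by
    field_simp; ring
  rw [this, omegaCurve]
  field_simp

theorem stmt_6 :
    ∃ h : ℝ → ℝ,
      (∀ μ ∈ Set.Icc (1 / 5 : ℝ) (2 / 5), h (omegaCurve μ) = etaCurve μ) ∧
      ConcaveOn ℝ (omegaCurve '' Set.Icc (1 / 5 : ℝ) (2 / 5)) h := by
  refine ⟨hAux, ?_, ?_⟩
  · intro μ hμ
    obtain ⟨h1, h2⟩ := hμ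
    have hμ0 : (0:ℝ) < μ := by linarith
    have hc0 : (0:ℝ) < 1 / (5 * μ) := by positivity
    have harccos_lt : Real.arccos (1 / (5 * μ)) < Real.pi / 2 :=
      Real.arccos_lt_pi_div_two.mpr hc0
    have harccos_nonneg : 0 ≤ Real.arccos (1 / (5 * μ)) := Real.arccos_nonneg _
    have hπ : (0:ℝ) < Real.pi := Real.pi_pos
    have key : 5 * Real.pi * omegaCurve μ = Real.tan (Real.arccos (1 / (5 * μ))) := by
      rw [Real.tan_arccos, omega_eq_tan μ ⟨h1, h2⟩]
    rw [hAux, key, Real.arctan_tan (by linarith) harccos_lt, etaCurve]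
  · have himg : omegaCurve '' Set.Icc (1 / 5 : ℝ) (2 / 5) ⊆ Set.Ici 0 := by
      rintro x ⟨μ, ⟨h1, h2⟩, rfl⟩
      have hμ0 : (0:ℝ) < μ := by linarith
      have : 0 ≤ omegaCurve μ := by
        rw [omegaCurve]
        positivity
      exact this
    have hcont : ContinuousOn omegaCurve (Set.Icc (1 / 5 : ℝ) (2 / 5)) := by
      apply ContinuousOn.mul
      · exact (continuousOn_id.div_const Real.pi)
      · apply Real.continuous_sqrt.comp_continuousOn
        apply ContinuousOn.sub continuousOn_const
        apply ContinuousOn.div continuousOn_const (by fun_prop)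
        intro μ hμ
        have : (0:ℝ) < μ := by have := hμ.1; linarith
        positivity
    have hconn : IsPreconnected (omegaCurve '' Set.Icc (1 / 5 : ℝ) (2 / 5)) :=
      isPreconnected_Icc.image _ hcont
    have hconv : Convex ℝ (omegaCurve '' Set.Icc (1 / 5 : ℝ) (2 / 5)) :=
      convex_iff_ordConnected.mpr hconn.ordConnected
    exact hAux_concave.subset himg hconv
end

section
/- Let f(z) = Mz + c with M the rotation by φ₀ = arccos(4/5) about the fixed point ĉ = (−1/5, 2/5), and let R = ([−1,0] × [0,1]) ∪ ([0,1] × [0,1]) = [−1,1] × [0,1]. Then a point z ∈ ℝ² satisfies f^j(z) ∈ R for all j ∈ ℤ if and only if ‖z − ĉ‖ ≤ 2/5. -/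
open Complex Real

private lemma aux_seq : ∀ n : ℕ, 1 ≤ n → ∃ a b : ℤ,
    (4 + 3*Complex.I)^n = (a : ℂ) + (b : ℂ)*Complex.I ∧ b % 5 = (2*a) % 5 ∧ ¬ (5 ∣ a) := by
  intro n hn
  induction n, hn using Nat.le_induction with
  | base => exact ⟨4, 3, by norm_num, by norm_num, by norm_num⟩
  | succ n hn ih =>
    obtain ⟨a, b, h, hb, ha⟩ := ih
    refine ⟨4*a - 3*b, 3*a + 4*b, ?_, by omega, by omega⟩
    rw [pow_succ, h]
    push_cast
    linear_combination (3*(b:ℂ)) * Complex.I_sq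

private lemma aux_not_root (n : ℕ) (hn : 1 ≤ n) : ((4 + 3*Complex.I)/5)^n ≠ 1 := by
  obtain ⟨a, b, h, hb, ha⟩ := aux_seq n hn
  intro hcon
  rw [div_pow, div_eq_one_iff_eq (by norm_num : ((5:ℂ))^n ≠ 0), h] at hcon
  have hre := congrArg Complex.re hcon
  push_cast at hre
  simp at hre
  have h5 : (5:ℤ) ∣ a := by
    have ha' : a = 5^n := by exact_mod_cast hre
    exact ha' ▸ dvd_pow_self 5 (by omega : n ≠ 0)
  exact ha h5

private lemma aux_dense (x ε : ℝ) (hε : 0 < ε) :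
    ∃ j k : ℤ, |x - (j * ((4+3*Complex.I)/5).arg + k * (2*π))| < ε := by
  set φ := ((4+3*Complex.I)/5).arg with hφ
  have habs : ‖(4+3*Complex.I)/5‖ = 1 := by
    rw [norm_div, Complex.norm_def, Complex.normSq_apply]
    norm_num [Complex.add_re, Complex.add_im, Complex.mul_re, Complex.mul_im]
  have hu : Complex.exp ((φ:ℂ) * Complex.I) = (4+3*Complex.I)/5 := by
    have := Complex.norm_mul_exp_arg_mul_I ((4+3*Complex.I)/5)
    rwa [habs, Complex.ofReal_one, one_mul] at this
  rcases AddSubgroup.dense_or_cyclic (AddSubgroup.closure {φ, 2*π}) with hd | ⟨a, hc⟩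
  · obtain ⟨y, hyG, hy⟩ := Metric.mem_closure_iff.mp (hd x) ε hε
    obtain ⟨m, n, hmn⟩ := AddSubgroup.mem_closure_pair.mp hyG
    refine ⟨m, n, ?_⟩
    rw [Real.dist_eq] at hy
    simpa [← hmn, zsmul_eq_mul] using hy
  · exfalso
    have hφG : φ ∈ AddSubgroup.closure ({φ, 2*π} : Set ℝ) :=
      AddSubgroup.subset_closure (by simp)
    have h2πG : (2*π) ∈ AddSubgroup.closure ({φ, 2*π} : Set ℝ) :=
      AddSubgroup.subset_closure (by simp)
    rw [hc, AddSubgroup.mem_closure_singleton] at hφG h2πG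
    obtain ⟨m, hm⟩ := hφG
    obtain ⟨n, hn⟩ := h2πG
    have hn0 : n ≠ 0 := by
      rintro rfl
      simp at hn
    have key : ((4+3*Complex.I)/5) ^ n = 1 := by
      rw [← hu, ← Complex.exp_int_mul]
      have h1 : (n : ℝ) * φ = m * (2*π) := by
        rw [← hm, ← hn]
        push_cast [zsmul_eq_mul]
        ring
      rw [show ((n:ℂ) * ((φ:ℂ) * Complex.I)) = (((n:ℝ) * φ : ℝ) : ℂ) * Complex.I by push_cast; ring,
        h1, show ((((m:ℝ) * (2*π) : ℝ)) : ℂ) * Complex.I = (m : ℂ) * (2*π*Complex.I) by push_cast; ring]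
      exact Complex.exp_int_mul_two_pi_mul_I m
    have key2 : ((4+3*Complex.I)/5) ^ (n.natAbs) = 1 := by
      rcases Int.natAbs_eq n with h | h
      · rw [← zpow_natCast, ← h, key]
      · rw [← zpow_natCast]
        rw [h, zpow_neg] at key
        exact inv_eq_one.mp key
    exact aux_not_root n.natAbs (Int.natAbs_pos.mpr hn0) key2

set_option maxHeartbeats 2000000 in
theorem stmt_8 (M : Matrix (Fin 2) (Fin 2) ℝ) (c cHat : Fin 2 → ℝ)
    (hM : M = (1 / 5 : ℝ) • !![4, -3; 3, 4]) (hc : c = ![1 / 5, 1 / 5])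
    (hcHat : cHat = ![-(1 / 5), 2 / 5])
    (f : (Fin 2 → ℝ) → (Fin 2 → ℝ)) (hf : ∀ z, f z = M.mulVec z + c)
    (R : Set (Fin 2 → ℝ))
    (hR : R = {w : Fin 2 → ℝ | w 0 ∈ Set.Icc (-1 : ℝ) 1 ∧ w 1 ∈ Set.Icc (0 : ℝ) 1})
    (z : Fin 2 → ℝ) (o : ℤ → (Fin 2 → ℝ)) (ho0 : o 0 = z)
    (horbit : ∀ j : ℤ, o (j + 1) = f (o j)) :
    (∀ j : ℤ, o j ∈ R) ↔
      Real.sqrt ((z 0 - cHat 0) ^ 2 + (z 1 - cHat 1) ^ 2) ≤ 2 / 5 := by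
  subst hM hc hcHat hR
  have hf0 : ∀ v : Fin 2 → ℝ, f v 0 = 4/5 * v 0 - 3/5 * v 1 + 1/5 := by
    intro v
    rw [hf]
    simp [Matrix.mulVec, dotProduct, Fin.sum_univ_two]
    ring
  have hf1 : ∀ v : Fin 2 → ℝ, f v 1 = 3/5 * v 0 + 4/5 * v 1 + 1/5 := by
    intro v
    rw [hf]
    simp [Matrix.mulVec, dotProduct, Fin.sum_univ_two]
    ring
  obtain ⟨u, hu_def⟩ : ∃ u : ℂ, u = (4+3*Complex.I)/5 := ⟨_, rfl⟩
  have hu_re : u.re = 4/5 := by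
    rw [hu_def]; norm_num [Complex.div_re, Complex.normSq_apply]
  have hu_im : u.im = 3/5 := by
    rw [hu_def]; norm_num [Complex.div_im, Complex.normSq_apply]
  have hu_ne : u ≠ 0 := by
    intro h
    have := congrArg Complex.re h
    rw [hu_re] at this
    norm_num at this
  have mulA : ∀ v : ℂ, (u * v).re = 4/5 * v.re - 3/5 * v.im := by
    intro v; rw [Complex.mul_re, hu_re, hu_im]
  have mulB : ∀ v : ℂ, (u * v).im = 3/5 * v.re + 4/5 * v.im := by
    intro v; rw [Complex.mul_im, hu_re, hu_im]; ring
  obtain ⟨w, hw_def⟩ : ∃ w : ℂ, w = ⟨z 0 + 1/5, z 1 - 2/5⟩ := ⟨_, rfl⟩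
  have hwre : w.re = z 0 + 1/5 := by rw [hw_def]
  have hwim : w.im = z 1 - 2/5 := by rw [hw_def]
  have key : ∀ j : ℤ, o j 0 = -(1/5) + (u^j * w).re ∧ o j 1 = 2/5 + (u^j * w).im := by
    intro j
    induction j using Int.induction_on with
    | zero =>
      rw [ho0] at *
      constructor
      · rw [zpow_zero, one_mul, hwre]; ring
      · rw [zpow_zero, one_mul, hwim]; ring
    | succ j ih =>
      have h1 := horbit (j : ℤ)
      have e : u^((j:ℤ)+1) * w = u * (u^(j:ℤ) * w) := by
        rw [zpow_add_one₀ hu_ne]; ring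
      rw [h1]
      constructor
      · rw [hf0, ih.1, ih.2, e, mulA]; ring
      · rw [hf1, ih.1, ih.2, e, mulB]; ring
    | pred j ih =>
      have h1' : o (-(j:ℤ)) = f (o (-(j:ℤ)-1)) := by
        have := horbit (-(j:ℤ)-1)
        rwa [show -(j:ℤ)-1+1 = -(j:ℤ) by ring] at this
      have e : u^(-(j:ℤ)) * w = u * (u^(-(j:ℤ)-1) * w) := by
        rw [show (-(j:ℤ)) = (-(j:ℤ)-1) + 1 by ring, zpow_add_one₀ hu_ne]; ring
      have E1 : 4/5 * o (-(j:ℤ)-1) 0 - 3/5 * o (-(j:ℤ)-1) 1 + 1/5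
          = -(1/5) + (u * (u^(-(j:ℤ)-1) * w)).re := by
        rw [← hf0, ← h1', ← e]; exact ih.1
      have E2 : 3/5 * o (-(j:ℤ)-1) 0 + 4/5 * o (-(j:ℤ)-1) 1 + 1/5
          = 2/5 + (u * (u^(-(j:ℤ)-1) * w)).im := by
        rw [← hf1, ← h1', ← e]; exact ih.2
      rw [mulA] at E1
      rw [mulB] at E2
      constructor <;> linarith
  have hnormu : Complex.normSq u = 1 := by
    rw [Complex.normSq_apply, hu_re, hu_im]; norm_num
  have hnorm : ∀ j : ℤ, (u^j*w).re^2 + (u^j*w).im^2 = w.re^2 + w.im^2 := by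
    intro j
    have h1 : Complex.normSq (u^j * w) = Complex.normSq w := by
      rw [map_mul, map_zpow₀, hnormu, one_zpow, one_mul]
    rw [Complex.normSq_apply, Complex.normSq_apply] at h1
    nlinarith [h1]
  have harg : (z 0 - ![-(1/5), 2/5] 0) ^ 2 + (z 1 - ![-(1/5), 2/5] 1) ^ 2
      = w.re^2 + w.im^2 := by
    simp only [Matrix.cons_val_zero, Matrix.cons_val_one, Matrix.head_cons, hwre, hwim]
    ring
  have hsqrt : Real.sqrt ((z 0 - ![-(1/5), 2/5] 0) ^ 2 + (z 1 - ![-(1/5), 2/5] 1) ^ 2) ≤ 2 / 5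
      ↔ w.re^2 + w.im^2 ≤ (2/5)^2 := by
    rw [harg, Real.sqrt_le_left (by norm_num : (0:ℝ) ≤ 2/5)]
  rw [hsqrt]
  constructor
  · -- hard direction
    intro h
    by_contra hgt
    push_neg at hgt
    obtain ⟨r, hr_def⟩ : ∃ r : ℝ, r = ‖w‖ := ⟨_, rfl⟩
    have hr2 : r^2 = w.re^2 + w.im^2 := by
      rw [hr_def, Complex.sq_norm, Complex.normSq_apply]; ring
    have hrpos : 2/5 < r :=
      lt_of_pow_lt_pow_left₀ 2 (hr_def ▸ norm_nonneg w) (by rw [hr2]; exact hgt)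
    obtain ⟨θ, hθ_def⟩ : ∃ θ : ℝ, θ = w.arg := ⟨_, rfl⟩
    obtain ⟨φ, hφ_def⟩ : ∃ φ : ℝ, φ = u.arg := ⟨_, rfl⟩
    have hw : (r : ℂ) * Complex.exp ((θ:ℂ) * Complex.I) = w := by
      rw [hr_def, hθ_def]; exact Complex.norm_mul_exp_arg_mul_I w
    have huexp : Complex.exp ((φ:ℂ) * Complex.I) = u := by
      have h1 := Complex.norm_mul_exp_arg_mul_I u
      have habs : ‖u‖ = 1 := by
        rw [Complex.norm_def, hnormu, Real.sqrt_one]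
      rw [habs, Complex.ofReal_one, one_mul] at h1
      rw [hφ_def]; exact h1
    have him : ∀ j : ℤ, (u^j * w).im = r * Real.sin (j * φ + θ) := by
      intro j
      have h1 : u ^ j = Complex.exp (((j * φ : ℝ) : ℂ) * Complex.I) := by
        rw [← huexp, ← Complex.exp_int_mul]
        congr 1
        push_cast
        ring
      rw [h1, ← hw, show Complex.exp (((j * φ : ℝ):ℂ) * Complex.I) * ((r:ℂ) * Complex.exp ((θ:ℂ) * Complex.I)) = (r:ℂ) * Complex.exp ((((j*φ + θ : ℝ)):ℂ) * Complex.I) by rw [mul_comm, mul_assoc, ← Complex.exp_add]; push_cast; ring_nf]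
      rw [Complex.mul_im, Complex.ofReal_re, Complex.ofReal_im, Complex.exp_ofReal_mul_I_im,
        Complex.exp_ofReal_mul_I_re]
      ring
    have hsin : ∀ j : ℤ, -(2/5) ≤ r * Real.sin (j * φ + θ) := by
      intro j
      have h2 := (h j).2.1
      rw [(key j).2, him j] at h2
      linarith
    obtain ⟨s, hs_def⟩ : ∃ s : ℝ, s = 2/(5*r) := ⟨_, rfl⟩
    have hs1 : s < 1 := by
      rw [hs_def, div_lt_one (by linarith)]
      linarith
    have hs0 : 0 < s := by
      rw [hs_def]
      positivity
    have hrs : r * s = 2/5 := by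
      rw [hs_def]
      field_simp
    obtain ⟨ε, hε_def⟩ : ∃ ε : ℝ, ε = Real.sqrt (1 - s) := ⟨_, rfl⟩
    have hεpos : 0 < ε := hε_def ▸ Real.sqrt_pos.mpr (by linarith)
    obtain ⟨j, k, hjk⟩ := aux_dense (-(π/2) - θ) ε hεpos
    have hφ' : φ = ((4+3*Complex.I)/5).arg := by rw [hφ_def, hu_def]
    rw [← hφ'] at hjk
    obtain ⟨d, hd_def⟩ : ∃ d : ℝ, d = θ + j * φ + k * (2*π) + π/2 := ⟨_, rfl⟩
    have hd : |d| < ε := by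
      rw [show d = -((-(π/2) - θ) - ((j:ℝ) * φ + (k:ℝ) * (2*π))) from by rw [hd_def]; ring,
        abs_neg]
      exact hjk
    have hd2 : d^2 < 1 - s := by
      have h1 := Real.sq_sqrt (by linarith : (0:ℝ) ≤ 1 - s)
      have h2 : d^2 < ε^2 := by
        rw [pow_two, pow_two, ← abs_mul_abs_self d]
        exact mul_self_lt_mul_self (abs_nonneg d) hd
      rw [hε_def] at h2
      linarith [h2, h1]
    have hsin_eq : Real.sin (j * φ + θ) = -Real.cos d := by
      rw [show ((j:ℝ) * φ + θ : ℝ) = (d - π/2) + ((-k : ℤ):ℝ) * (2*π) from by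
          rw [hd_def]; push_cast; ring,
        Real.sin_add_int_mul_two_pi, Real.sin_sub_pi_div_two]
    have hcos := Real.one_sub_sq_div_two_le_cos (x := d)
    have hfin := hsin j
    rw [hsin_eq] at hfin
    have hrcos : r * Real.cos d ≤ 2/5 := by
      have : r * -Real.cos d = -(r * Real.cos d) := by ring
      rw [this] at hfin
      linarith
    have hcosgt : (1+s)/2 < Real.cos d := by linarith
    have h2' : r * ((1+s)/2) < r * Real.cos d :=
      mul_lt_mul_of_pos_left hcosgt (by linarith : (0:ℝ) < r)
    have h3' : r * ((1+s)/2) = (r + 2/5)/2 := by rw [← hrs]; ring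
    linarith
  · intro hle j
    have hn := hnorm j
    simp only [Set.mem_setOf_eq, Set.mem_Icc]
    refine ⟨⟨?_, ?_⟩, ?_, ?_⟩
    · rw [(key j).1]; nlinarith [hn, sq_nonneg ((u^j*w).im), sq_nonneg ((u^j*w).re + 2/5)]
    · rw [(key j).1]; nlinarith [hn, sq_nonneg ((u^j*w).im), sq_nonneg ((u^j*w).re - 2/5)]
    · rw [(key j).2]; nlinarith [hn, sq_nonneg ((u^j*w).re), sq_nonneg ((u^j*w).im + 2/5)]
    · rw [(key j).2]; nlinarith [hn, sq_nonneg ((u^j*w).re), sq_nonneg ((u^j*w).im - 2/5)]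
end
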